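/- The spin-marginal of the Edwards-Sokal measure is the Ising Gibbs measure: for every σ ∈ {-1,+1}^V, Σ_{ω ∈ {0,1}^E} ν_{p,h,G}(σ,ω) = λ_{β,h,V}(σ), where ν_{p,h,G}(σ,ω) ∝ B_J(ω) Δ(σ,ω) exp(β Σ_{i∈V} h_i (δ_{σ_i,1}-δ_{σ_i,-1})) and λ_{β,h,V}(σ) ∝ exp(β(Σ_{{i,j}∈E} J_{ij} σ_i σ_j + Σ_{i∈V} h_i σ_i)). -/

import Mathlib

open Finset

noncomputable section

variable {V : Type}

/-- The spin value (±1) attached to a Boolean spin (`true ↔ +1`, `false ↔ -1`). -/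
def spin (b : Bool) : ℝ := if b then 1 else -1

/-- The subgraph of `G` whose open edges are the edges in `F`. -/
def openSub (G : SimpleGraph V) (F : Finset (Sym2 V)) : SimpleGraph V where
  Adj i j := G.Adj i j ∧ s(i, j) ∈ F
  symm := by
    refine ⟨?_⟩
    intro i j h
    exact ⟨h.1.symm, by rw [Sym2.eq_swap]; exact h.2⟩
  loopless := ⟨fun i h => G.irrefl h.1⟩

instance [Fintype V] (H : SimpleGraph V) : Fintype H.ConnectedComponent := by
  classical exact Fintype.ofSurjective H.connectedComponentMk Quot.exists_rep

/-- The vertex set of a connected component, as a `Finset`. -/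
def compSupp [Fintype V] (H : SimpleGraph V) (c : H.ConnectedComponent) : Finset V := by
  classical exact Finset.univ.filter fun v => H.connectedComponentMk v = c

/-- Kronecker delta `δ_{σ_i,σ_j}` of a configuration on an (unordered) edge. -/
def eDelta {S : Type} [DecidableEq S] (σ : V → S) : Sym2 V → ℝ :=
  Sym2.lift ⟨fun i j => if σ i = σ j then 1 else 0, fun _ _ => by simp [eq_comm]⟩

/-- Product of spins `σ_i σ_j` on an (unordered) edge. -/
def eProd (σ : V → Bool) : Sym2 V → ℝ :=
  Sym2.lift ⟨fun i j => spin (σ i) * spin (σ j), fun _ _ => mul_comm _ _⟩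

/-- The consistency indicator `Δ(σ,ω)`: equal to `1` iff `σ` is constant on
every open edge of the configuration `F`. -/
def Delta (G : SimpleGraph V) (F : Finset (Sym2 V)) (σ : V → Bool) : ℝ := by
  classical exact if ∀ i j, G.Adj i j → s(i, j) ∈ F → σ i = σ j then 1 else 0

/-- The Bernoulli factor `B_J(ω) = ∏_{e open} p_e ∏_{e closed} (1-p_e)`. -/
def bern [Fintype V] [DecidableEq V] (G : SimpleGraph V) [DecidableRel G.Adj]
    (p : Sym2 V → ℝ) (F : Finset (Sym2 V)) : ℝ :=
  (∏ e ∈ F, p e) * ∏ e ∈ G.edgeFinset \ F, (1 - p e)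

/-- The Edwards–Sokal weight `B_J(ω) Δ(σ,ω) exp(β Σ_i h_i (δ_{σ_i,1} - δ_{σ_i,-1}))`. -/
def esW [Fintype V] [DecidableEq V] (G : SimpleGraph V) [DecidableRel G.Adj]
    (β : ℝ) (p : Sym2 V → ℝ) (h : V → ℝ) (σ : V → Bool) (F : Finset (Sym2 V)) : ℝ :=
  bern G p F * Delta G F σ * Real.exp (β * ∑ i, h i * spin (σ i))

/-- The (unnormalized) Ising Boltzmann weight with free boundary condition. -/
def isingW [Fintype V] [DecidableEq V] (G : SimpleGraph V) [DecidableRel G.Adj]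
    (β : ℝ) (J : Sym2 V → ℝ) (h : V → ℝ) (σ : V → Bool) : ℝ :=
  Real.exp (β * ((∑ e ∈ G.edgeFinset, J e * eProd σ e) + ∑ i, h i * spin (σ i)))

lemma delta_eq_prod [Fintype V] [DecidableEq V] (G : SimpleGraph V) [DecidableRel G.Adj]
    (F : Finset (Sym2 V)) (hF : F ⊆ G.edgeFinset) (σ : V → Bool) :
    Delta G F σ = ∏ e ∈ F, eDelta σ e := by
  classical
  unfold Delta
  split_ifs with hc
  · symm; apply Finset.prod_eq_one
    intro e he
    have heE := hF he
    rw [SimpleGraph.mem_edgeFinset] at heE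
    induction e using Sym2.ind with
    | _ i j =>
      have hadj : G.Adj i j := heE
      simp [eDelta, hc i j hadj he]
  · push_neg at hc
    obtain ⟨i, j, hadj, hmem, hne⟩ := hc
    symm
    apply Finset.prod_eq_zero hmem
    simp [eDelta, hne]

lemma edge_factor (β : ℝ) (J p : Sym2 V → ℝ)
    (hp : ∀ e, p e = 1 - Real.exp (-(2 * β) * J e)) (σ : V → Bool) (e : Sym2 V) :
    p e * eDelta σ e + (1 - p e)
      = Real.exp (β * (J e * eProd σ e)) * Real.exp (-(β * J e)) := by
  induction e using Sym2.ind with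
  | _ i j =>
    rw [hp]
    by_cases hij : σ i = σ j
    · have h1 : eDelta σ s(i, j) = 1 := by simp [eDelta, hij]
      have h2 : eProd σ s(i, j) = 1 := by
        cases hj : σ j <;> norm_num [eProd, spin, hij, hj]
      rw [h1, h2, ← Real.exp_add]
      ring_nf
      simp
    · have h1 : eDelta σ s(i, j) = 0 := by simp [eDelta, hij]
      have h2 : eProd σ s(i, j) = -1 := by
        cases hi : σ i <;> cases hj : σ j <;> simp_all [eProd, spin]
      rw [h1, h2, ← Real.exp_add]
      ring_nf

lemma key_sum [Fintype V] [DecidableEq V] (G : SimpleGraph V) [DecidableRel G.Adj]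
    (β : ℝ) (J p : Sym2 V → ℝ)
    (hp : ∀ e, p e = 1 - Real.exp (-(2 * β) * J e)) (σ : V → Bool) :
    ∑ F ∈ G.edgeFinset.powerset, bern G p F * Delta G F σ
      = Real.exp (β * ∑ e ∈ G.edgeFinset, J e * eProd σ e)
          * Real.exp (-(β * ∑ e ∈ G.edgeFinset, J e)) := by
  classical
  calc ∑ F ∈ G.edgeFinset.powerset, bern G p F * Delta G F σ
      = ∑ F ∈ G.edgeFinset.powerset,
          (∏ e ∈ F, p e * eDelta σ e) * ∏ e ∈ G.edgeFinset \ F, (1 - p e) := by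
        apply Finset.sum_congr rfl
        intro F hF
        rw [Finset.mem_powerset] at hF
        rw [delta_eq_prod G F hF σ, bern, Finset.prod_mul_distrib]
        ring
    _ = ∏ e ∈ G.edgeFinset, (p e * eDelta σ e + (1 - p e)) :=
        (Finset.prod_add _ _ _).symm
    _ = ∏ e ∈ G.edgeFinset,
          Real.exp (β * (J e * eProd σ e)) * Real.exp (-(β * J e)) :=
        Finset.prod_congr rfl fun e _ => edge_factor β J p hp σ e
    _ = _ := by
        rw [Finset.prod_mul_distrib, ← Real.exp_sum, ← Real.exp_sum,
          Finset.mul_sum, Finset.mul_sum, Finset.sum_neg_distrib]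

/-- Theorem (marginals of the ES measure), part (1): the spin-marginal of the
Edwards–Sokal measure is the Ising Gibbs measure. -/
theorem statement4 [Fintype V] [DecidableEq V]
    (G : SimpleGraph V) [DecidableRel G.Adj]
    (β : ℝ) (hβ : 0 < β)
    (J : Sym2 V → ℝ) (hJ : ∀ e ∈ G.edgeFinset, 0 ≤ J e)
    (h : V → ℝ)
    (p : Sym2 V → ℝ) (hp : ∀ e, p e = 1 - Real.exp (-(2 * β) * J e))
    (σ : V → Bool) :
    (∑ F ∈ G.edgeFinset.powerset, esW G β p h σ F) /
        (∑ σ' : V → Bool, ∑ F ∈ G.edgeFinset.powerset, esW G β p h σ' F)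
      = isingW G β J h σ / ∑ σ' : V → Bool, isingW G β J h σ' := by
  have hfac : ∀ σ' : V → Bool,
      ∑ F ∈ G.edgeFinset.powerset, esW G β p h σ' F
        = Real.exp (-(β * ∑ e ∈ G.edgeFinset, J e)) * isingW G β J h σ' := by
    intro σ'
    unfold esW isingW
    rw [← Finset.sum_mul, key_sum G β J p hp σ', mul_add, Real.exp_add]
    ring
  simp only [hfac]
  rw [← Finset.mul_sum,
    mul_div_mul_left _ _ (Real.exp_ne_zero (-(β * ∑ e ∈ G.edgeFinset, J e)))]

end
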